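/- For m = 1 (scalar blocks), the transfer matrix T = [[-a_n/b_n, -c_{n-1}/b_n],[1,0]] ⋯ [[-a_1/b_1, -c_0/b_1],[1,0]] satisfies det(T - I_2) = -((-1)^n/(b_1 ⋯ b_n)) · [ (z_1 + z_2) - (-1)^n (b_1 ⋯ b_n + c_0 ⋯ c_{n-1}) ], where z_1 + z_2 = tr( [[a_n, -b_{n-1}c_{n-1}],[1,0]] ⋯ [[a_2, -b_1c_1],[1,0]] · [[a_1, -b_n c_0],[1,0]] ). -/

import Mathlib

open Matrix

/-- The scalar (`m = 1`) transfer matrix: partial products of the factors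
`[[-a_k/b_k, -c_{k-1}/b_k], [1, 0]]`, index decreasing from left to right. -/
noncomputable def scalarTransfer (a b c : ℕ → ℂ) : ℕ → Matrix (Fin 2) (Fin 2) ℂ
  | 0 => 1
  | k + 1 => !![-a (k + 1) / b (k + 1), -c k / b (k + 1); 1, 0] * scalarTransfer a b c k

/-- The partial products of the `2 × 2` matrices for the corner case: rightmost factor
`[[a_1, -b_n c_0], [1, 0]]`, then `[[a_k, -b_{k-1} c_{k-1}], [1, 0]]` for `k = 2, …`
with index decreasing from left to right. -/
noncomputable def cornerProd (n : ℕ) (a b c : ℕ → ℂ) : ℕ → Matrix (Fin 2) (Fin 2) ℂ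
  | 0 => 1
  | 1 => !![a 1, -(b n * c 0); 1, 0]
  | k + 2 => !![a (k + 2), -(b (k + 1) * c (k + 1)); 1, 0] * cornerProd n a b c (k + 1)

noncomputable def auxQ (a b c : ℕ → ℂ) : ℕ → Matrix (Fin 2) (Fin 2) ℂ
  | 0 => 1
  | k + 1 => !![a (k + 1), c k; -b (k + 1), 0] * auxQ a b c k

lemma auxQ_corner (n : ℕ) (a b c : ℕ → ℂ) (k : ℕ) :
    auxQ a b c (k + 1) * !![1, 0; 0, -b n] =
      !![1, 0; 0, -b (k + 1)] * cornerProd n a b c (k + 1) := by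
  induction k with
  | zero =>
      show (!![a 1, c 0; -b 1, 0] * 1) * _ = _
      rw [mul_one, cornerProd]
      ext i j
      fin_cases i <;> fin_cases j <;> simp [Matrix.mul_apply, Fin.sum_univ_two] <;> ring
  | succ k ih =>
      show (!![a (k+2), c (k+1); -b (k+2), 0] * auxQ a b c (k+1)) * _ = _ * (!![a (k + 2), -(b (k + 1) * c (k + 1)); 1, 0] * cornerProd n a b c (k + 1))
      rw [mul_assoc, ih, ← mul_assoc, ← mul_assoc]
      congr 1
      ext i j
      fin_cases i <;> fin_cases j <;> simp [Matrix.mul_apply, Fin.sum_univ_two] <;> ring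

lemma auxQ_smul (a b c : ℕ → ℂ) (k : ℕ) (hb : ∀ i, 1 ≤ i → i ≤ k → b i ≠ 0) :
    auxQ a b c k = ((-1 : ℂ) ^ k * ∏ i ∈ Finset.Icc 1 k, b i) • scalarTransfer a b c k := by
  induction k with
  | zero => simp [auxQ, scalarTransfer]
  | succ k ih =>
      have hbk : b (k+1) ≠ 0 := hb _ (Nat.succ_le_succ (Nat.zero_le k)) le_rfl
      have ih' := ih (fun i h1 h2 => hb i h1 (h2.trans (Nat.le_succ k)))
      have key : !![a (k + 1), c k; -b (k + 1), 0] =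
          (-b (k+1)) • !![-a (k + 1) / b (k + 1), -c k / b (k + 1); 1, 0] := by
        ext i j
        fin_cases i <;> fin_cases j <;> simp <;> field_simp
      show !![a (k + 1), c k; -b (k + 1), 0] * auxQ a b c k = _
      rw [ih', key, scalarTransfer, Matrix.smul_mul, Matrix.mul_smul, smul_smul,
        Finset.prod_Icc_succ_top (Nat.succ_le_succ (Nat.zero_le k))]
      congr 1
      ring

lemma det_scalarTransfer (a b c : ℕ → ℂ) (k : ℕ) :
    (scalarTransfer a b c k).det =
      (∏ i ∈ Finset.range k, c i) / ∏ i ∈ Finset.Icc 1 k, b i := by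
  induction k with
  | zero => simp [scalarTransfer]
  | succ k ih =>
      rw [scalarTransfer, Matrix.det_mul, ih, Matrix.det_fin_two_of,
        Finset.prod_range_succ, Finset.prod_Icc_succ_top (Nat.succ_le_succ (Nat.zero_le k))]
      field_simp
      ring

/-- For `m = 1`:
`det (T - I_2) = -((-1)^n/(b_1 ⋯ b_n)) · [(z_1 + z_2) - (-1)^n (b_1 ⋯ b_n + c_0 ⋯ c_{n-1})]`,
where `z_1 + z_2` is the trace of the product
`[[a_n, -b_{n-1} c_{n-1}], [1, 0]] ⋯ [[a_2, -b_1 c_1], [1, 0]] · [[a_1, -b_n c_0], [1, 0]]`. -/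
theorem det_scalarTransfer_sub_one (n : ℕ) (hn : 2 ≤ n) (a b c : ℕ → ℂ)
    (hb : ∀ i, 1 ≤ i → i ≤ n → b i ≠ 0)
    (hc : ∀ i, i < n → c i ≠ 0) :
    (scalarTransfer a b c n - (1 : Matrix (Fin 2) (Fin 2) ℂ)).det =
      -((-1 : ℂ) ^ n / ∏ i ∈ Finset.Icc 1 n, b i) *
        ((cornerProd n a b c n).trace -
          (-1 : ℂ) ^ n * ((∏ i ∈ Finset.Icc 1 n, b i) + ∏ i ∈ Finset.range n, c i)) := by
  set T := scalarTransfer a b c n with hT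
  set P := cornerProd n a b c n with hP
  set B := ∏ i ∈ Finset.Icc 1 n, b i with hB
  set C := ∏ i ∈ Finset.range n, c i with hC
  have hBne : B ≠ 0 := Finset.prod_ne_zero_iff.2 fun i hi => by
    simp only [Finset.mem_Icc] at hi; exact hb i hi.1 hi.2
  have hbn : b n ≠ 0 := hb n (le_trans (by norm_num) hn) le_rfl
  -- trace Q n = trace P
  obtain ⟨m, rfl⟩ : ∃ m, n = m + 1 := ⟨n - 1, by omega⟩
  have hq := auxQ_corner (m+1) a b c m
  have hQ := auxQ_smul a b c (m+1) hb
  have h00 : (auxQ a b c (m+1) * !![1, 0; 0, -b (m+1)]) 0 0 =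
      (!![1, 0; 0, -b (m+1)] * P) 0 0 := by rw [hq]
  have h11 : (auxQ a b c (m+1) * !![1, 0; 0, -b (m+1)]) 1 1 =
      (!![1, 0; 0, -b (m+1)] * P) 1 1 := by rw [hq]
  simp [Matrix.mul_apply, Fin.sum_univ_two] at h00 h11
  have h11' : auxQ a b c (m+1) 1 1 = P 1 1 := mul_right_cancel₀ hbn (by linear_combination h11)
  have htrQ : (auxQ a b c (m+1)).trace = P.trace := by
    rw [Matrix.trace_fin_two, Matrix.trace_fin_two, h00, h11']
  obtain ⟨ε, hε_def⟩ : ∃ ε : ℂ, (-1 : ℂ) ^ (m + 1) = ε := ⟨_, rfl⟩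
  have hε : ε * ε = 1 := by
    rw [← hε_def, ← pow_add]
    have : (m + 1) + (m + 1) = 2 * (m + 1) := by ring
    rw [this, pow_mul]
    norm_num
  rw [hQ, Matrix.trace_smul, smul_eq_mul, hε_def] at htrQ
  have htrT : T.trace = ε * P.trace / B := by
    rw [← htrQ]
    field_simp
    linear_combination (-(B * T.trace)) * hε
  have hdet : T.det = C / B := det_scalarTransfer a b c (m+1)
  have hkey : (T - 1).det = T.det - T.trace + 1 := by
    rw [Matrix.det_fin_two, Matrix.det_fin_two, Matrix.trace_fin_two]
    simp [Matrix.sub_apply, Matrix.one_apply]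
    ring
  rw [hkey, hdet, htrT, hε_def]
  field_simp
  linear_combination (-(B + C)) * hε
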